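/- Define L_0 = 1 and, for j ≥ 1, L_j = L_{j−1}·(t − t^{q^j})/((t − ζ^{q^{j+1}})·(t − ζ)^{q^j − q^{j−1}}·(t − ζ^q)^{q^{j−1}}) in 𝔽_{q²}(t). Then the formal power series log(X) = Σ_{j≥0} (−1)^j·L_j^{−1}·X^{q^j} over 𝔽_{q²}(t) satisfies log(Ψ_x(X)) = x·log(X) and log(Ψ_y(X)) = y·log(X) as formal power series identities, where Ψ_x(X) = T^{σ−1}X^{q²} + (T^σ + T^{(q−1)+σ})X^q + x·X and Ψ_y(X) = ζ·T^{σ−1}X^{q²} + (t·T^σ + ζ·T^{(q−1)+σ})X^q + y·X. -/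

import Mathlib

set_option maxHeartbeats 1000000
set_option maxHeartbeats 1000000

lemma stmt9_hca {K : Type*} [Field K] (t u u1 u2 e e' : K)
    (h1 : t - e ≠ 0) (h2 : t - e' ≠ 0) (h3 : u - e ≠ 0) (h4 : u - e' ≠ 0)
    (h5 : u1 - e ≠ 0) (h6 : u1 - e' ≠ 0) (h7 : u2 - e ≠ 0) :
    (((t - u1) * (u - e)) * ((t - u2) * (u1 - e'))) /
      (((t - e) * (u1 - e') * (u - e')) * ((t - e') * (u2 - e) * (u1 - e))) * ((u - e') / (u - e))
    = ((t - u1) * (t - u2)) / ((t - e) * (t - e') * (u2 - e) * (u1 - e)) := by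
  rw [div_mul_div_comm, div_eq_div_iff (mul_ne_zero (mul_ne_zero
      (mul_ne_zero (mul_ne_zero h1 h6) h4) (mul_ne_zero (mul_ne_zero h2 h7) h5)) h3)
    (mul_ne_zero (mul_ne_zero (mul_ne_zero h1 h2) h7) h5)]
  ring

lemma stmt9_hcay {K : Type*} [Field K] (t u u1 u2 e e' : K)
    (h1 : t - e ≠ 0) (h2 : t - e' ≠ 0) (h3 : u - e ≠ 0) (h4 : u - e' ≠ 0)
    (h5 : u1 - e ≠ 0) (h6 : u1 - e' ≠ 0) (h7 : u2 - e ≠ 0) :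
    (((t - u1) * (u - e)) * ((t - u2) * (u1 - e'))) /
      (((t - e) * (u1 - e') * (u - e')) * ((t - e') * (u2 - e) * (u1 - e))) *
        (e * ((u - e') / (u - e)))
    = (e * ((t - u1) * (t - u2))) / ((t - e) * (t - e') * (u2 - e) * (u1 - e)) := by
  linear_combination e * stmt9_hca t u u1 u2 e e' h1 h2 h3 h4 h5 h6 h7

lemma stmt9_inv_step {K : Type*} [Field K] (a n d : K) (ha : a ≠ 0) (hn : n ≠ 0) (hd : d ≠ 0) :
    (a * n / d)⁻¹ * (n / d) = a⁻¹ := by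
  field_simp


lemma stmt9_comp_step {K : Type*} [Field K] (a n1 d1 n2 d2 : K) (hd1 : d1 ≠ 0) (hd2 : d2 ≠ 0) :
    a * n1 / d1 * n2 / d2 = a * (n1 * n2) / (d1 * d2) := by
  field_simp

lemma stmt9_key1 {K : Type*} [Field K] (L t u1 z w : K) (hL : L ≠ 0)
    (h1 : t - z ≠ 0) (h2 : t - w ≠ 0) (h3 : u1 - z ≠ 0) (h4 : u1 - w ≠ 0) (h5 : t - u1 ≠ 0)
    (hLf : L = (t - u1) * (t - z) / ((t - z) * (u1 - w) * (t - w))) :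
    (t - z)⁻¹ + ((u1 - z) / (t - w) * (t - z))⁻¹ - L⁻¹ * ((u1 - w) * (u1 - z))⁻¹
    = -(((t - z) * (t - w))⁻¹ * L⁻¹) := by
  rw [hLf]
  field_simp
  ring

lemma stmt9_key1y {K : Type*} [Field K] (L t u1 z w : K) (hL : L ≠ 0)
    (h1 : t - z ≠ 0) (h2 : t - w ≠ 0) (h3 : u1 - z ≠ 0) (h4 : u1 - w ≠ 0) (h5 : t - u1 ≠ 0)
    (hLf : L = (t - u1) * (t - z) / ((t - z) * (u1 - w) * (t - w))) :
    t * (t - z)⁻¹ + z * ((u1 - z) / (t - w) * (t - z))⁻¹ - L⁻¹ * (u1 * ((u1 - w) * (u1 - z))⁻¹)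
    = -(t * ((t - z) * (t - w))⁻¹ * L⁻¹) := by
  rw [hLf]
  field_simp
  ring
set_option maxHeartbeats 1000000

lemma stmt9_hclx {K : Type*} [Field K] (t u1 u2 e e' : K)
    (h1 : t - e ≠ 0) (h2 : t - e' ≠ 0)
    (h5 : u1 - e ≠ 0) (h6 : u1 - e' ≠ 0) (h7 : u2 - e ≠ 0) (h8 : u2 - e' ≠ 0) :
    ((t - u1) * (t - u2)) / ((t - e) * (t - e') * (u2 - e) * (u1 - e)) -
      ((t - u2) * (u1 - e')) / ((t - e') * (u2 - e) * (u1 - e)) *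
        ((u1 - e')⁻¹ + (u1 - e) / ((u2 - e') * (u1 - e'))) +
      ((u2 - e) * (u2 - e'))⁻¹
    = ((t - e) * (t - e'))⁻¹ := by
  have hB : (u1 - e')⁻¹ + (u1 - e) / ((u2 - e') * (u1 - e'))
      = ((u2 - e') + (u1 - e)) / ((u2 - e') * (u1 - e')) := by
    rw [inv_eq_one_div, div_add_div _ _ h6 (mul_ne_zero h8 h6),
      div_eq_div_iff (mul_ne_zero h6 (mul_ne_zero h8 h6)) (mul_ne_zero h8 h6)]
    ring
  rw [hB, div_mul_div_comm,
    div_sub_div _ _ (mul_ne_zero (mul_ne_zero (mul_ne_zero h1 h2) h7) h5)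
      (mul_ne_zero (mul_ne_zero (mul_ne_zero h2 h7) h5) (mul_ne_zero h8 h6)),
    inv_eq_one_div, inv_eq_one_div,
    div_add_div _ _ (mul_ne_zero (mul_ne_zero (mul_ne_zero (mul_ne_zero h1 h2) h7) h5)
      (mul_ne_zero (mul_ne_zero (mul_ne_zero h2 h7) h5) (mul_ne_zero h8 h6)))
      (mul_ne_zero h7 h8),
    div_eq_div_iff (mul_ne_zero (mul_ne_zero (mul_ne_zero (mul_ne_zero (mul_ne_zero h1 h2) h7) h5)
      (mul_ne_zero (mul_ne_zero (mul_ne_zero h2 h7) h5) (mul_ne_zero h8 h6)))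
      (mul_ne_zero h7 h8)) (mul_ne_zero h1 h2)]
  ring

lemma stmt9_hcly {K : Type*} [Field K] (t u1 u2 e e' : K)
    (h1 : t - e ≠ 0) (h2 : t - e' ≠ 0)
    (h5 : u1 - e ≠ 0) (h6 : u1 - e' ≠ 0) (h7 : u2 - e ≠ 0) (h8 : u2 - e' ≠ 0) :
    (e * ((t - u1) * (t - u2))) / ((t - e) * (t - e') * (u2 - e) * (u1 - e)) -
      ((t - u2) * (u1 - e')) / ((t - e') * (u2 - e) * (u1 - e)) *
        (u1 * (u1 - e')⁻¹ + e' * ((u1 - e) / ((u2 - e') * (u1 - e')))) +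
      u2 * ((u2 - e) * (u2 - e'))⁻¹
    = t * ((t - e) * (t - e'))⁻¹ := by
  have hB : u1 * (u1 - e')⁻¹ + e' * ((u1 - e) / ((u2 - e') * (u1 - e')))
      = (u1 * (u2 - e') + e' * (u1 - e)) / ((u2 - e') * (u1 - e')) := by
    rw [inv_eq_one_div, mul_one_div, ← mul_div_assoc, div_add_div _ _ h6 (mul_ne_zero h8 h6),
      div_eq_div_iff (mul_ne_zero h6 (mul_ne_zero h8 h6)) (mul_ne_zero h8 h6)]
    ring
  rw [hB, div_mul_div_comm, inv_eq_one_div, inv_eq_one_div, mul_one_div, mul_one_div,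
    div_sub_div _ _ (mul_ne_zero (mul_ne_zero (mul_ne_zero h1 h2) h7) h5)
      (mul_ne_zero (mul_ne_zero (mul_ne_zero h2 h7) h5) (mul_ne_zero h8 h6)),
    div_add_div _ _ (mul_ne_zero (mul_ne_zero (mul_ne_zero (mul_ne_zero h1 h2) h7) h5)
      (mul_ne_zero (mul_ne_zero (mul_ne_zero h2 h7) h5) (mul_ne_zero h8 h6)))
      (mul_ne_zero h7 h8),
    div_eq_div_iff (mul_ne_zero (mul_ne_zero (mul_ne_zero (mul_ne_zero (mul_ne_zero h1 h2) h7) h5)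
      (mul_ne_zero (mul_ne_zero (mul_ne_zero h2 h7) h5) (mul_ne_zero h8 h6)))
      (mul_ne_zero h7 h8)) (mul_ne_zero h1 h2)]
  ring

theorem stmt9 {F : Type*} [Field F] [Fintype F]
    (q : ℕ) (hq : Fintype.card F = q ^ 2) (ζ : F) (hζ : ζ ^ q ≠ ζ)
    (Lf : ℕ → RatFunc F) (hL0 : Lf 0 = 1)
    (hL : ∀ j : ℕ, Lf (j + 1) = Lf j * (RatFunc.X - RatFunc.X ^ q ^ (j + 1)) /
      ((RatFunc.X - RatFunc.C (ζ ^ q ^ (j + 2))) *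
        (RatFunc.X - RatFunc.C ζ) ^ (q ^ (j + 1) - q ^ j) *
        (RatFunc.X - RatFunc.C ζ ^ q) ^ q ^ j))
    (g : PowerSeries (RatFunc F))
    (hg1 : ∀ j : ℕ, PowerSeries.coeff (R := RatFunc F) (q ^ j) g = (-1 : RatFunc F) ^ j * (Lf j)⁻¹)
    (hg2 : ∀ n : ℕ, (∀ j : ℕ, q ^ j ≠ n) → PowerSeries.coeff (R := RatFunc F) n g = 0) :
    let t : RatFunc F := RatFunc.X
    let z : RatFunc F := RatFunc.C ζ
    let x : RatFunc F := ((t - z) * (t - z ^ q))⁻¹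
    let y : RatFunc F := t * x
    let Ψx : Polynomial (RatFunc F) :=
      Polynomial.C ((t - z ^ q) / (t - z)) * Polynomial.X ^ q ^ 2 +
        Polynomial.C ((t - z)⁻¹ + ((t - z ^ q) ^ (q - 1) * (t - z))⁻¹) * Polynomial.X ^ q +
        Polynomial.C x * Polynomial.X
    let Ψy : Polynomial (RatFunc F) :=
      Polynomial.C (z * ((t - z ^ q) / (t - z))) * Polynomial.X ^ q ^ 2 +
        Polynomial.C (t * (t - z)⁻¹ + z * ((t - z ^ q) ^ (q - 1) * (t - z))⁻¹) *
          Polynomial.X ^ q +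
        Polynomial.C y * Polynomial.X
    (∀ n : ℕ, ∑ j ∈ Finset.range (n + 1),
        (-1 : RatFunc F) ^ j * (Lf j)⁻¹ * (Ψx ^ q ^ j).coeff n =
        x * PowerSeries.coeff (R := RatFunc F) n g) ∧
      (∀ n : ℕ, ∑ j ∈ Finset.range (n + 1),
        (-1 : RatFunc F) ^ j * (Lf j)⁻¹ * (Ψy ^ q ^ j).coeff n =
        y * PowerSeries.coeff (R := RatFunc F) n g) := by
  intro t z x y Ψx Ψy
  -- characteristic facts
  obtain ⟨p, hpc⟩ := CharP.exists F
  haveI := hpc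
  have hp : p.Prime := CharP.char_is_prime F p
  haveI : Fact p.Prime := ⟨hp⟩
  obtain ⟨nn, -, hcard⟩ := FiniteField.card F p
  have h1q : 1 < q := by
    have h2 : (1:ℕ) < Fintype.card F := Fintype.one_lt_card
    rw [hq] at h2
    exact (Nat.one_lt_pow_iff (by norm_num)).mp h2
  have hq2 : 2 ≤ q := h1q
  obtain ⟨i, -, hqp⟩ : ∃ i ≤ (nn:ℕ), q = p ^ i :=
    (Nat.dvd_prime_pow hp).mp ⟨q, by rw [← hcard, hq, sq]⟩
  haveI : CharP (RatFunc F) p := charP_of_injective_algebraMap (algebraMap F (RatFunc F)).injective p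
  have frobK : ∀ (a b : RatFunc F) (e : ℕ), (a + b) ^ q ^ e = a ^ q ^ e + b ^ q ^ e := by
    intro a b e; rw [hqp, ← pow_mul]; exact add_pow_char_pow a b p (i*e)
  have frobKs : ∀ (a b : RatFunc F) (e : ℕ), (a - b) ^ q ^ e = a ^ q ^ e - b ^ q ^ e := by
    intro a b e; rw [hqp, ← pow_mul]; exact sub_pow_char_pow a b (i*e)
  have frobq : ∀ a b : RatFunc F, (a - b) ^ q = a ^ q - b ^ q := by
    intro a b; have := frobKs a b 1; rwa [pow_one] at this
  have frobP : ∀ (a b : Polynomial (RatFunc F)) (e : ℕ), (a + b) ^ q ^ e = a ^ q ^ e + b ^ q ^ e := by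
    intro a b e; rw [hqp, ← pow_mul]; exact add_pow_char_pow a b p (i*e)
  -- zeta facts
  have hzz : ∀ m : ℕ, ζ ^ q ^ (m + 2) = ζ ^ q ^ m := by
    intro m
    have h : ζ ^ q ^ (m + 2) = (ζ ^ q ^ m) ^ q ^ 2 := by rw [← pow_mul, ← pow_add]
    rw [h, ← hq, FiniteField.pow_card]
  have hfa : ∀ (a : F) (e : ℕ), (a ^ q ^ e) ^ q = a ^ q ^ (e + 1) := by
    intro a e; rw [← pow_mul, ← pow_succ]
  have hzq : ∀ (a : F) (e : ℕ), (a ^ q) ^ q ^ e = a ^ q ^ (e + 1) := by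
    intro a e; rw [← pow_mul]; congr 1; rw [pow_succ]; ring
  have hXa : ∀ e : ℕ, ((RatFunc.X : RatFunc F) ^ q ^ e) ^ q = RatFunc.X ^ q ^ (e + 1) := by
    intro e; rw [← pow_mul, ← pow_succ]
  have hpar : ∀ m : ℕ, (ζ ^ q ^ m = ζ ∧ ζ ^ q ^ (m+1) = ζ ^ q) ∨
      (ζ ^ q ^ m = ζ ^ q ∧ ζ ^ q ^ (m+1) = ζ) := by
    intro m
    induction m with
    | zero => exact Or.inl ⟨by simp, by simp⟩
    | succ m ih =>
      rcases ih with ⟨h1, h2⟩ | ⟨h1, h2⟩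
      · exact Or.inr ⟨h2, by rw [show m+1+1 = m+2 from rfl, hzz m, h1]⟩
      · exact Or.inl ⟨h2, by rw [show m+1+1 = m+2 from rfl, hzz m, h1]⟩
  -- nonvanishing facts
  have hXCne : ∀ e : ℕ, e ≠ 0 → ∀ a : F, (RatFunc.X : RatFunc F) ^ e - RatFunc.C a ≠ 0 := by
    intro e he a h
    rw [← RatFunc.algebraMap_X, ← RatFunc.algebraMap_C (K := F) a, ← map_pow, ← map_sub] at h
    have h0 : (Polynomial.X ^ e - Polynomial.C a : Polynomial F) ≠ 0 := by
      intro h'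
      have hc := congrArg (fun P => Polynomial.coeff P e) h'
      simp [Polynomial.coeff_X_pow, Polynomial.coeff_C, he] at hc
    exact RatFunc.algebraMap_ne_zero h0 h
  have hXC1 : ∀ a : F, (RatFunc.X : RatFunc F) - RatFunc.C a ≠ 0 := by
    intro a
    have h := hXCne 1 one_ne_zero a
    rwa [pow_one] at h
  have hXXne : ∀ e : ℕ, 1 < e → (RatFunc.X : RatFunc F) - RatFunc.X ^ e ≠ 0 := by
    intro e he h
    rw [← RatFunc.algebraMap_X, ← map_pow, ← map_sub] at h
    have h0 : (Polynomial.X - Polynomial.X ^ e : Polynomial F) ≠ 0 := by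
      intro h'
      have hc := congrArg (fun P => Polynomial.coeff P 1) h'
      simp only [Polynomial.coeff_sub, Polynomial.coeff_X_one, Polynomial.coeff_X_pow,
        Polynomial.coeff_zero] at hc
      rw [if_neg (by omega : ¬ (1 = e))] at hc
      norm_num at hc
    exact RatFunc.algebraMap_ne_zero h0 h
  have nUE : ∀ e1 e2 : ℕ, (RatFunc.X : RatFunc F) ^ q ^ e1 - RatFunc.C (ζ ^ q ^ e2) ≠ 0 :=
    fun e1 e2 => hXCne _ (pow_pos (show 0 < q by omega) e1).ne' _
  have nXU : ∀ e : ℕ, (RatFunc.X : RatFunc F) - RatFunc.X ^ q ^ (e + 1) ≠ 0 :=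
    fun e => hXXne _ (Nat.one_lt_pow (Nat.succ_ne_zero e) h1q)
  have hLne : ∀ j, Lf j ≠ 0 := by
    intro j
    induction j with
    | zero => rw [hL0]; exact one_ne_zero
    | succ j ih =>
      rw [hL j]
      apply div_ne_zero (mul_ne_zero ih (nXU j))
      refine mul_ne_zero (mul_ne_zero (hXC1 _) (pow_ne_zero _ (hXC1 ζ))) ?_
      rw [← map_pow]
      exact pow_ne_zero _ (hXC1 _)
  have hpoweq : ∀ a b : ℕ, q ^ a = q ^ b ↔ a = b :=
    fun a b => ⟨fun h => Nat.pow_right_injective hq2 h, fun h => by rw [h]⟩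
  have hsub : ∀ (a : F) (e : ℕ),
      ((RatFunc.X : RatFunc F) - RatFunc.C a) ^ q ^ e = RatFunc.X ^ q ^ e - RatFunc.C (a ^ q ^ e) := by
    intro a e; rw [frobKs, map_pow]
  -- main sum plumbing
  have main : ∀ A B c : RatFunc F,
      (B - (Lf 1)⁻¹ * c ^ q = -(c * (Lf 1)⁻¹)) →
      (∀ m : ℕ, (Lf m)⁻¹ * A ^ q ^ m - (Lf (m+1))⁻¹ * B ^ q ^ (m+1)
          + (Lf (m+2))⁻¹ * c ^ q ^ (m+2) = c * (Lf (m+2))⁻¹) →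
      ∀ n : ℕ, (∑ j ∈ Finset.range (n + 1), (-1 : RatFunc F) ^ j * (Lf j)⁻¹ *
          ((Polynomial.C A * Polynomial.X ^ q ^ 2 + Polynomial.C B * Polynomial.X ^ q +
            Polynomial.C c * Polynomial.X) ^ q ^ j).coeff n)
        = c * PowerSeries.coeff (R := RatFunc F) n g := by
    intro A B c h1 h2 n
    have hcoeff : ∀ j nn : ℕ,
        ((Polynomial.C A * Polynomial.X ^ q ^ 2 + Polynomial.C B * Polynomial.X ^ q +
          Polynomial.C c * Polynomial.X) ^ q ^ j).coeff nn
        = (if nn = q ^ (j+2) then A ^ q ^ j else 0) + (if nn = q ^ (j+1) then B ^ q ^ j else 0)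
          + (if nn = q ^ j then c ^ q ^ j else 0) := by
      intro j nn
      rw [frobP, frobP, mul_pow, mul_pow, mul_pow, ← pow_mul, ← pow_mul]
      rw [show q ^ 2 * q ^ j = q ^ (j+2) by rw [pow_add]; ring,
        show q * q ^ j = q ^ (j+1) by rw [pow_add]; ring]
      rw [← Polynomial.C_pow, ← Polynomial.C_pow, ← Polynomial.C_pow]
      simp only [Polynomial.coeff_add, Polynomial.coeff_C_mul, Polynomial.coeff_X_pow,
        mul_ite, mul_one, mul_zero]
    by_cases hex : ∃ k, q ^ k = n
    · obtain ⟨k, rfl⟩ := hex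
      rw [hg1 k]
      have hsub1 : Finset.range (k+1) ⊆ Finset.range (q ^ k + 1) := by
        apply Finset.range_subset_range.mpr
        have := Nat.lt_pow_self (n := k) h1q
        omega
      have hvan : ∀ j ∈ Finset.range (q ^ k + 1), j ∉ Finset.range (k+1) →
          (-1 : RatFunc F) ^ j * (Lf j)⁻¹ *
            ((Polynomial.C A * Polynomial.X ^ q ^ 2 + Polynomial.C B * Polynomial.X ^ q +
              Polynomial.C c * Polynomial.X) ^ q ^ j).coeff (q ^ k) = 0 := by
        intro j _ hj2
        simp only [Finset.mem_range, not_lt] at hj2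
        rw [hcoeff, if_neg (fun h => by have := (hpoweq _ _).mp h; omega),
          if_neg (fun h => by have := (hpoweq _ _).mp h; omega),
          if_neg (fun h => by have := (hpoweq _ _).mp h; omega)]
        ring
      rw [← Finset.sum_subset hsub1 hvan]
      obtain _ | _ | k' := k
      · -- k = 0
        rw [Finset.sum_range_one, hcoeff,
          if_neg (fun h => by have := (hpoweq _ _).mp h; omega),
          if_neg (fun h => by have := (hpoweq _ _).mp h; omega),
          if_pos rfl, hL0]
        simp
      · -- k = 1
        rw [Finset.sum_range_succ, Finset.sum_range_one, hcoeff, hcoeff,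
          if_neg (fun h => by have := (hpoweq _ _).mp h; omega),
          if_pos (by rw [hpoweq]; try omega),
          if_neg (fun h => by have := (hpoweq _ _).mp h; omega),
          if_neg (fun h => by have := (hpoweq _ _).mp h; omega),
          if_neg (fun h => by have := (hpoweq _ _).mp h; omega),
          if_pos rfl, hL0]
        simp only [pow_zero, pow_one, inv_one, one_mul, mul_one, add_zero, zero_add]
        linear_combination h1
      · -- k = k' + 2
        rw [Finset.sum_range_succ, Finset.sum_range_succ, Finset.sum_range_succ]
        rw [Finset.sum_eq_zero (fun j hj => by
          simp only [Finset.mem_range] at hj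
          rw [hcoeff, if_neg (fun h => by have := (hpoweq _ _).mp h; omega),
            if_neg (fun h => by have := (hpoweq _ _).mp h; omega),
            if_neg (fun h => by have := (hpoweq _ _).mp h; omega)]
          ring)]
        rw [hcoeff, hcoeff, hcoeff,
          if_pos (by rw [hpoweq]; try omega), if_neg (fun h => by have := (hpoweq _ _).mp h; omega),
          if_neg (fun h => by have := (hpoweq _ _).mp h; omega),
          if_neg (fun h => by have := (hpoweq _ _).mp h; omega),
          if_pos (by rw [hpoweq]; try omega), if_neg (fun h => by have := (hpoweq _ _).mp h; omega),
          if_neg (fun h => by have := (hpoweq _ _).mp h; omega),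
          if_neg (fun h => by have := (hpoweq _ _).mp h; omega),
          if_pos rfl]
        have h2' := h2 k'
        simp only [pow_succ]
        linear_combination ((-1 : RatFunc F) ^ k') * h2'
    · rw [hg2 n (fun j h => hex ⟨j, h⟩), mul_zero]
      refine Finset.sum_eq_zero fun j hj => ?_
      rw [hcoeff, if_neg (fun h => hex ⟨j+2, h.symm⟩), if_neg (fun h => hex ⟨j+1, h.symm⟩),
        if_neg (fun h => hex ⟨j, h.symm⟩)]
      ring
  -- shared expansion facts
  have hq1 : (1:ℕ) ≤ q := by omega
  have hCq : (RatFunc.C ζ : RatFunc F) ^ q = RatFunc.C (ζ ^ q) := (map_pow _ _ _).symm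
  have hCpow : ∀ e : ℕ, (RatFunc.C ζ : RatFunc F) ^ q ^ e = RatFunc.C (ζ ^ q ^ e) :=
    fun e => (map_pow _ _ _).symm
  have hz2 : (ζ ^ q) ^ q = ζ := by
    rw [← pow_mul, ← sq, show ζ ^ q ^ 2 = ζ from by rw [← hq]; exact FiniteField.pow_card ζ]
  have e1' : ((RatFunc.X - RatFunc.C ζ : RatFunc F)) ^ q
      = RatFunc.X ^ q - RatFunc.C (ζ ^ q) := by
    rw [frobq, hCq]
  have e2' : ((RatFunc.X - RatFunc.C (ζ ^ q) : RatFunc F)) ^ q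
      = RatFunc.X ^ q - RatFunc.C ζ := by
    rw [frobq, ← map_pow, hz2]
  have nz3' : (RatFunc.X : RatFunc F) ^ q - RatFunc.C (ζ ^ q) ≠ 0 := hXCne q (by omega) _
  have nz4' : (RatFunc.X : RatFunc F) ^ q - RatFunc.C ζ ≠ 0 := hXCne q (by omega) ζ
  have nz5 : (RatFunc.X : RatFunc F) - RatFunc.X ^ q ≠ 0 := by
    have h := nXU 0; rwa [pow_one] at h
  have e3f : ((RatFunc.X - RatFunc.C (ζ ^ q) : RatFunc F)) ^ (q - 1)
      = (RatFunc.X ^ q - RatFunc.C ζ) / (RatFunc.X - RatFunc.C (ζ ^ q)) := by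
    rw [pow_sub₀ _ (hXC1 _) hq1, pow_one, e2', ← div_eq_mul_inv]
  have hcq1 : (((RatFunc.X - RatFunc.C ζ) * (RatFunc.X - RatFunc.C (ζ ^ q)) : RatFunc F))⁻¹ ^ q
      = ((RatFunc.X ^ q - RatFunc.C (ζ ^ q)) * (RatFunc.X ^ q - RatFunc.C ζ))⁻¹ := by
    rw [inv_pow, mul_pow, e1', e2']
  have hL1f : Lf 1 = (RatFunc.X - RatFunc.X ^ q) * (RatFunc.X - RatFunc.C ζ) /
      ((RatFunc.X - RatFunc.C ζ) * (RatFunc.X ^ q - RatFunc.C (ζ ^ q)) *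
        (RatFunc.X - RatFunc.C (ζ ^ q))) := by
    have h := hL 0
    rw [hL0, one_mul, show (0:ℕ)+2 = 2 from rfl, show (0:ℕ)+1 = 1 from rfl, hCq] at h
    rw [show ζ ^ q ^ 2 = ζ from by rw [← hq]; exact FiniteField.pow_card ζ] at h
    rw [pow_one] at h
    rw [pow_zero] at h
    rw [pow_one] at h
    rw [pow_sub₀ _ (hXC1 ζ) hq1, pow_one, e1'] at h
    rw [h, show (RatFunc.X - RatFunc.C ζ) * ((RatFunc.X ^ q - RatFunc.C (ζ ^ q)) *
        (RatFunc.X - RatFunc.C ζ)⁻¹) * (RatFunc.X - RatFunc.C (ζ ^ q))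
      = ((RatFunc.X - RatFunc.C ζ) * (RatFunc.X ^ q - RatFunc.C (ζ ^ q)) *
          (RatFunc.X - RatFunc.C (ζ ^ q))) / (RatFunc.X - RatFunc.C ζ) from by
        rw [div_eq_mul_inv]; ring, div_div_eq_mul_div]
  -- k = 1 identities
  have h1x : ((RatFunc.X - RatFunc.C ζ : RatFunc F))⁻¹ +
        ((RatFunc.X - RatFunc.C ζ ^ q) ^ (q - 1) * (RatFunc.X - RatFunc.C ζ))⁻¹ -
        (Lf 1)⁻¹ * (((RatFunc.X - RatFunc.C ζ) * (RatFunc.X - RatFunc.C ζ ^ q))⁻¹) ^ q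
      = -(((RatFunc.X - RatFunc.C ζ) * (RatFunc.X - RatFunc.C ζ ^ q))⁻¹ * (Lf 1)⁻¹) := by
    simp only [hCq]
    rw [hcq1, e3f]
    exact stmt9_key1 (Lf 1) RatFunc.X (RatFunc.X ^ q) (RatFunc.C ζ) (RatFunc.C (ζ ^ q))
      (hLne 1) (hXC1 ζ) (hXC1 _) nz4' nz3' nz5 hL1f
  have h1y : RatFunc.X * ((RatFunc.X - RatFunc.C ζ : RatFunc F))⁻¹ +
        RatFunc.C ζ * ((RatFunc.X - RatFunc.C ζ ^ q) ^ (q - 1) * (RatFunc.X - RatFunc.C ζ))⁻¹ -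
        (Lf 1)⁻¹ * (RatFunc.X * ((RatFunc.X - RatFunc.C ζ) * (RatFunc.X - RatFunc.C ζ ^ q))⁻¹) ^ q
      = -(RatFunc.X * ((RatFunc.X - RatFunc.C ζ) * (RatFunc.X - RatFunc.C ζ ^ q))⁻¹ * (Lf 1)⁻¹) := by
    simp only [hCq]
    rw [mul_pow, hcq1, e3f]
    exact stmt9_key1y (Lf 1) RatFunc.X (RatFunc.X ^ q) (RatFunc.C ζ) (RatFunc.C (ζ ^ q))
      (hLne 1) (hXC1 ζ) (hXC1 _) nz4' nz3' nz5 hL1f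
  -- the general identities (k = m + 2)
  have keyx : ∀ m : ℕ,
      ((Lf m)⁻¹ * ((RatFunc.X - RatFunc.C ζ ^ q) / (RatFunc.X - RatFunc.C ζ) : RatFunc F) ^ q ^ m -
        (Lf (m+1))⁻¹ * ((RatFunc.X - RatFunc.C ζ)⁻¹ +
          ((RatFunc.X - RatFunc.C ζ ^ q) ^ (q - 1) * (RatFunc.X - RatFunc.C ζ))⁻¹) ^ q ^ (m+1) +
        (Lf (m+2))⁻¹ * (((RatFunc.X - RatFunc.C ζ) * (RatFunc.X - RatFunc.C ζ ^ q))⁻¹) ^ q ^ (m+2)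
      = ((RatFunc.X - RatFunc.C ζ) * (RatFunc.X - RatFunc.C ζ ^ q))⁻¹ * (Lf (m+2))⁻¹) ∧
      ((Lf m)⁻¹ * (RatFunc.C ζ * ((RatFunc.X - RatFunc.C ζ ^ q) / (RatFunc.X - RatFunc.C ζ)) : RatFunc F) ^ q ^ m -
        (Lf (m+1))⁻¹ * (RatFunc.X * (RatFunc.X - RatFunc.C ζ)⁻¹ +
          RatFunc.C ζ * ((RatFunc.X - RatFunc.C ζ ^ q) ^ (q - 1) * (RatFunc.X - RatFunc.C ζ))⁻¹) ^ q ^ (m+1) +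
        (Lf (m+2))⁻¹ * (RatFunc.X * ((RatFunc.X - RatFunc.C ζ) * (RatFunc.X - RatFunc.C ζ ^ q))⁻¹) ^ q ^ (m+2)
      = RatFunc.X * ((RatFunc.X - RatFunc.C ζ) * (RatFunc.X - RatFunc.C ζ ^ q))⁻¹ * (Lf (m+2))⁻¹) := by
    intro m
    have w1 : ((RatFunc.X - RatFunc.C ζ : RatFunc F)) ^ q ^ m
        = RatFunc.X ^ q ^ m - RatFunc.C (ζ ^ q ^ m) := hsub ζ m
    have w1' : ((RatFunc.X - RatFunc.C ζ : RatFunc F)) ^ q ^ (m+1)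
        = RatFunc.X ^ q ^ (m+1) - RatFunc.C (ζ ^ q ^ (m+1)) := hsub ζ (m+1)
    have w1'' : ((RatFunc.X - RatFunc.C ζ : RatFunc F)) ^ q ^ (m+2)
        = RatFunc.X ^ q ^ (m+2) - RatFunc.C (ζ ^ q ^ m) := by
      rw [hsub ζ (m+2), hzz m]
    have w2 : ((RatFunc.X - RatFunc.C (ζ ^ q) : RatFunc F)) ^ q ^ m
        = RatFunc.X ^ q ^ m - RatFunc.C (ζ ^ q ^ (m+1)) := by
      rw [hsub, hzq]
    have w2' : ((RatFunc.X - RatFunc.C (ζ ^ q) : RatFunc F)) ^ q ^ (m+1)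
        = RatFunc.X ^ q ^ (m+1) - RatFunc.C (ζ ^ q ^ m) := by
      rw [hsub, hzq, hzz m]
    have w2'' : ((RatFunc.X - RatFunc.C (ζ ^ q) : RatFunc F)) ^ q ^ (m+2)
        = RatFunc.X ^ q ^ (m+2) - RatFunc.C (ζ ^ q ^ (m+1)) := by
      rw [hsub, hzq, show m + 2 + 1 = m + 1 + 2 from by omega, hzz (m+1)]
    have w4 : ((RatFunc.X ^ q ^ (m+1) - RatFunc.C (ζ ^ q ^ m) : RatFunc F)) ^ (q - 1)
        = (RatFunc.X ^ q ^ (m+2) - RatFunc.C (ζ ^ q ^ (m+1))) *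
          (RatFunc.X ^ q ^ (m+1) - RatFunc.C (ζ ^ q ^ m))⁻¹ := by
      rw [pow_sub₀ _ (nUE (m+1) m) hq1, pow_one]
      congr 1
      rw [frobq, hXa (m+1), show m + 1 + 1 = m + 2 from rfl, ← map_pow, hfa]
    have w3 : (((RatFunc.X - RatFunc.C (ζ ^ q) : RatFunc F)) ^ (q - 1)) ^ q ^ (m+1)
        = (RatFunc.X ^ q ^ (m+2) - RatFunc.C (ζ ^ q ^ (m+1))) *
          (RatFunc.X ^ q ^ (m+1) - RatFunc.C (ζ ^ q ^ m))⁻¹ := by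
      rw [pow_right_comm, w2', w4]
    have hA1 := hL m
    rw [hCq, hzz m, pow_sub₀ _ (hXC1 ζ) (Nat.pow_le_pow_right (by omega) (Nat.le_succ m)),
      w1', w1, w2] at hA1
    have eL1f : Lf (m+1) = Lf m *
        ((RatFunc.X - RatFunc.X ^ q ^ (m+1)) * (RatFunc.X ^ q ^ m - RatFunc.C (ζ ^ q ^ m))) /
        ((RatFunc.X - RatFunc.C (ζ ^ q ^ m)) *
          (RatFunc.X ^ q ^ (m+1) - RatFunc.C (ζ ^ q ^ (m+1))) *
          (RatFunc.X ^ q ^ m - RatFunc.C (ζ ^ q ^ (m+1)))) := by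
      rw [hA1, show (RatFunc.X - RatFunc.C (ζ ^ q ^ m)) *
          ((RatFunc.X ^ q ^ (m+1) - RatFunc.C (ζ ^ q ^ (m+1))) *
            (RatFunc.X ^ q ^ m - RatFunc.C (ζ ^ q ^ m))⁻¹) *
          (RatFunc.X ^ q ^ m - RatFunc.C (ζ ^ q ^ (m+1)))
        = ((RatFunc.X - RatFunc.C (ζ ^ q ^ m)) *
            (RatFunc.X ^ q ^ (m+1) - RatFunc.C (ζ ^ q ^ (m+1))) *
            (RatFunc.X ^ q ^ m - RatFunc.C (ζ ^ q ^ (m+1)))) /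
            (RatFunc.X ^ q ^ m - RatFunc.C (ζ ^ q ^ m)) from by
          rw [div_eq_mul_inv]; ring, div_div_eq_mul_div, mul_assoc]
    have hA2 := hL (m+1)
    rw [show m + 1 + 1 = m + 2 from rfl] at hA2
    rw [hCq, hzz (m+1), pow_sub₀ _ (hXC1 ζ) (Nat.pow_le_pow_right (by omega) (Nat.le_succ (m+1))),
      w1'', w1', w2'] at hA2
    have eL2f : Lf (m+2) = Lf (m+1) *
        ((RatFunc.X - RatFunc.X ^ q ^ (m+2)) * (RatFunc.X ^ q ^ (m+1) - RatFunc.C (ζ ^ q ^ (m+1)))) /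
        ((RatFunc.X - RatFunc.C (ζ ^ q ^ (m+1))) *
          (RatFunc.X ^ q ^ (m+2) - RatFunc.C (ζ ^ q ^ m)) *
          (RatFunc.X ^ q ^ (m+1) - RatFunc.C (ζ ^ q ^ m))) := by
      rw [hA2, show (RatFunc.X - RatFunc.C (ζ ^ q ^ (m+1))) *
          ((RatFunc.X ^ q ^ (m+2) - RatFunc.C (ζ ^ q ^ m)) *
            (RatFunc.X ^ q ^ (m+1) - RatFunc.C (ζ ^ q ^ (m+1)))⁻¹) *
          (RatFunc.X ^ q ^ (m+1) - RatFunc.C (ζ ^ q ^ m))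
        = ((RatFunc.X - RatFunc.C (ζ ^ q ^ (m+1))) *
            (RatFunc.X ^ q ^ (m+2) - RatFunc.C (ζ ^ q ^ m)) *
            (RatFunc.X ^ q ^ (m+1) - RatFunc.C (ζ ^ q ^ m))) /
            (RatFunc.X ^ q ^ (m+1) - RatFunc.C (ζ ^ q ^ (m+1))) from by
          rw [div_eq_mul_inv]; ring, div_div_eq_mul_div, mul_assoc]
    have nzj : (RatFunc.X : RatFunc F) - RatFunc.X ^ q ^ (m+2) ≠ 0 := by
      have h := nXU (m+1); rwa [show m + 1 + 1 = m + 2 from rfl] at h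
    have nN0 : (RatFunc.X - RatFunc.X ^ q ^ (m+1)) *
        (RatFunc.X ^ q ^ m - RatFunc.C (ζ ^ q ^ m)) ≠ 0 := mul_ne_zero (nXU m) (nUE m m)
    have nD0 : (RatFunc.X - RatFunc.C (ζ ^ q ^ m)) *
        (RatFunc.X ^ q ^ (m+1) - RatFunc.C (ζ ^ q ^ (m+1))) *
        (RatFunc.X ^ q ^ m - RatFunc.C (ζ ^ q ^ (m+1))) ≠ 0 :=
      mul_ne_zero (mul_ne_zero (hXC1 _) (nUE (m+1) (m+1))) (nUE m (m+1))
    have nN1 : (RatFunc.X - RatFunc.X ^ q ^ (m+2)) *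
        (RatFunc.X ^ q ^ (m+1) - RatFunc.C (ζ ^ q ^ (m+1))) ≠ 0 :=
      mul_ne_zero nzj (nUE (m+1) (m+1))
    have nD1 : (RatFunc.X - RatFunc.C (ζ ^ q ^ (m+1))) *
        (RatFunc.X ^ q ^ (m+2) - RatFunc.C (ζ ^ q ^ m)) *
        (RatFunc.X ^ q ^ (m+1) - RatFunc.C (ζ ^ q ^ m)) ≠ 0 :=
      mul_ne_zero (mul_ne_zero (hXC1 _) (nUE (m+2) m)) (nUE (m+1) m)
    have eLc : Lf (m+2) = Lf m *
        (((RatFunc.X - RatFunc.X ^ q ^ (m+1)) * (RatFunc.X ^ q ^ m - RatFunc.C (ζ ^ q ^ m))) *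
          ((RatFunc.X - RatFunc.X ^ q ^ (m+2)) * (RatFunc.X ^ q ^ (m+1) - RatFunc.C (ζ ^ q ^ (m+1))))) /
        (((RatFunc.X - RatFunc.C (ζ ^ q ^ m)) *
            (RatFunc.X ^ q ^ (m+1) - RatFunc.C (ζ ^ q ^ (m+1))) *
            (RatFunc.X ^ q ^ m - RatFunc.C (ζ ^ q ^ (m+1)))) *
          ((RatFunc.X - RatFunc.C (ζ ^ q ^ (m+1))) *
            (RatFunc.X ^ q ^ (m+2) - RatFunc.C (ζ ^ q ^ m)) *
            (RatFunc.X ^ q ^ (m+1) - RatFunc.C (ζ ^ q ^ m)))) := by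
      rw [eL2f, eL1f]
      exact stmt9_comp_step (Lf m) _ _ _ _ nD0 nD1
    have q1 : (Lf (m+1))⁻¹ = (Lf (m+2))⁻¹ *
        (((RatFunc.X - RatFunc.X ^ q ^ (m+2)) * (RatFunc.X ^ q ^ (m+1) - RatFunc.C (ζ ^ q ^ (m+1)))) /
          ((RatFunc.X - RatFunc.C (ζ ^ q ^ (m+1))) *
            (RatFunc.X ^ q ^ (m+2) - RatFunc.C (ζ ^ q ^ m)) *
            (RatFunc.X ^ q ^ (m+1) - RatFunc.C (ζ ^ q ^ m)))) := by
      rw [eL2f]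
      exact (stmt9_inv_step (Lf (m+1)) _ _ (hLne (m+1)) nN1 nD1).symm
    have q0 : (Lf m)⁻¹ = (Lf (m+2))⁻¹ *
        ((((RatFunc.X - RatFunc.X ^ q ^ (m+1)) * (RatFunc.X ^ q ^ m - RatFunc.C (ζ ^ q ^ m))) *
          ((RatFunc.X - RatFunc.X ^ q ^ (m+2)) * (RatFunc.X ^ q ^ (m+1) - RatFunc.C (ζ ^ q ^ (m+1))))) /
        (((RatFunc.X - RatFunc.C (ζ ^ q ^ m)) *
            (RatFunc.X ^ q ^ (m+1) - RatFunc.C (ζ ^ q ^ (m+1))) *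
            (RatFunc.X ^ q ^ m - RatFunc.C (ζ ^ q ^ (m+1)))) *
          ((RatFunc.X - RatFunc.C (ζ ^ q ^ (m+1))) *
            (RatFunc.X ^ q ^ (m+2) - RatFunc.C (ζ ^ q ^ m)) *
            (RatFunc.X ^ q ^ (m+1) - RatFunc.C (ζ ^ q ^ m))))) := by
      rw [eLc]
      exact (stmt9_inv_step (Lf m) _ _ (hLne m) (mul_ne_zero nN0 nN1) (mul_ne_zero nD0 nD1)).symm
    have eA : ((RatFunc.X - RatFunc.C (ζ ^ q)) / (RatFunc.X - RatFunc.C ζ) : RatFunc F) ^ q ^ m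
        = (RatFunc.X ^ q ^ m - RatFunc.C (ζ ^ q ^ (m+1))) /
          (RatFunc.X ^ q ^ m - RatFunc.C (ζ ^ q ^ m)) := by
      rw [div_pow, w2, w1]
    have eB : ((RatFunc.X - RatFunc.C ζ : RatFunc F)⁻¹ +
          ((RatFunc.X - RatFunc.C (ζ ^ q)) ^ (q - 1) * (RatFunc.X - RatFunc.C ζ))⁻¹) ^ q ^ (m+1)
        = (RatFunc.X ^ q ^ (m+1) - RatFunc.C (ζ ^ q ^ (m+1)))⁻¹ +
          (RatFunc.X ^ q ^ (m+1) - RatFunc.C (ζ ^ q ^ m)) /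
            ((RatFunc.X ^ q ^ (m+2) - RatFunc.C (ζ ^ q ^ (m+1))) *
              (RatFunc.X ^ q ^ (m+1) - RatFunc.C (ζ ^ q ^ (m+1)))) := by
      rw [frobK, inv_pow, inv_pow, mul_pow, w3, w1']
      simp only [mul_inv_rev, inv_inv, div_eq_mul_inv]
      ring
    have eBy : (RatFunc.X * (RatFunc.X - RatFunc.C ζ : RatFunc F)⁻¹ +
          RatFunc.C ζ * ((RatFunc.X - RatFunc.C (ζ ^ q)) ^ (q - 1) * (RatFunc.X - RatFunc.C ζ))⁻¹) ^ q ^ (m+1)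
        = RatFunc.X ^ q ^ (m+1) * (RatFunc.X ^ q ^ (m+1) - RatFunc.C (ζ ^ q ^ (m+1)))⁻¹ +
          RatFunc.C (ζ ^ q ^ (m+1)) * ((RatFunc.X ^ q ^ (m+1) - RatFunc.C (ζ ^ q ^ m)) /
            ((RatFunc.X ^ q ^ (m+2) - RatFunc.C (ζ ^ q ^ (m+1))) *
              (RatFunc.X ^ q ^ (m+1) - RatFunc.C (ζ ^ q ^ (m+1))))) := by
      rw [frobK, mul_pow, mul_pow, inv_pow, inv_pow, mul_pow, w3, w1', hCpow (m+1)]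
      simp only [mul_inv_rev, inv_inv, div_eq_mul_inv]
      ring
    have ec : (((RatFunc.X - RatFunc.C ζ) * (RatFunc.X - RatFunc.C (ζ ^ q)) : RatFunc F))⁻¹ ^ q ^ (m+2)
        = ((RatFunc.X ^ q ^ (m+2) - RatFunc.C (ζ ^ q ^ m)) *
          (RatFunc.X ^ q ^ (m+2) - RatFunc.C (ζ ^ q ^ (m+1))))⁻¹ := by
      rw [inv_pow, mul_pow, w1'', w2'']
    have exprod : ((RatFunc.X - RatFunc.C ζ) * (RatFunc.X - RatFunc.C (ζ ^ q)) : RatFunc F)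
        = (RatFunc.X - RatFunc.C (ζ ^ q ^ m)) * (RatFunc.X - RatFunc.C (ζ ^ q ^ (m+1))) := by
      rcases hpar m with ⟨ha, hb⟩ | ⟨ha, hb⟩ <;> rw [ha, hb] <;> ring
    have hcaI := stmt9_hca RatFunc.X (RatFunc.X ^ q ^ m) (RatFunc.X ^ q ^ (m+1))
      (RatFunc.X ^ q ^ (m+2)) (RatFunc.C (ζ ^ q ^ m)) (RatFunc.C (ζ ^ q ^ (m+1)))
      (hXC1 _) (hXC1 _) (nUE m m) (nUE m (m+1)) (nUE (m+1) m) (nUE (m+1) (m+1)) (nUE (m+2) m)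
    have hclI := stmt9_hclx RatFunc.X (RatFunc.X ^ q ^ (m+1)) (RatFunc.X ^ q ^ (m+2))
      (RatFunc.C (ζ ^ q ^ m)) (RatFunc.C (ζ ^ q ^ (m+1)))
      (hXC1 _) (hXC1 _) (nUE (m+1) m) (nUE (m+1) (m+1)) (nUE (m+2) m) (nUE (m+2) (m+1))
    have hcayI := stmt9_hcay RatFunc.X (RatFunc.X ^ q ^ m) (RatFunc.X ^ q ^ (m+1))
      (RatFunc.X ^ q ^ (m+2)) (RatFunc.C (ζ ^ q ^ m)) (RatFunc.C (ζ ^ q ^ (m+1)))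
      (hXC1 _) (hXC1 _) (nUE m m) (nUE m (m+1)) (nUE (m+1) m) (nUE (m+1) (m+1)) (nUE (m+2) m)
    have hclyI := stmt9_hcly RatFunc.X (RatFunc.X ^ q ^ (m+1)) (RatFunc.X ^ q ^ (m+2))
      (RatFunc.C (ζ ^ q ^ m)) (RatFunc.C (ζ ^ q ^ (m+1)))
      (hXC1 _) (hXC1 _) (nUE (m+1) m) (nUE (m+1) (m+1)) (nUE (m+2) m) (nUE (m+2) (m+1))
    constructor
    · simp only [hCq]
      rw [eA, eB, ec, exprod]
      linear_combination ((RatFunc.X ^ q ^ m - RatFunc.C (ζ ^ q ^ (m+1))) /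
          (RatFunc.X ^ q ^ m - RatFunc.C (ζ ^ q ^ m))) * q0 -
        ((RatFunc.X ^ q ^ (m+1) - RatFunc.C (ζ ^ q ^ (m+1)))⁻¹ +
          (RatFunc.X ^ q ^ (m+1) - RatFunc.C (ζ ^ q ^ m)) /
            ((RatFunc.X ^ q ^ (m+2) - RatFunc.C (ζ ^ q ^ (m+1))) *
              (RatFunc.X ^ q ^ (m+1) - RatFunc.C (ζ ^ q ^ (m+1))))) * q1 +
        (Lf (m+2))⁻¹ * hcaI + (Lf (m+2))⁻¹ * hclI
    · simp only [hCq]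
      rw [mul_pow, hCpow m, eA, eBy, mul_pow, ec, exprod]
      linear_combination (RatFunc.C (ζ ^ q ^ m) * ((RatFunc.X ^ q ^ m - RatFunc.C (ζ ^ q ^ (m+1))) /
          (RatFunc.X ^ q ^ m - RatFunc.C (ζ ^ q ^ m)))) * q0 -
        (RatFunc.X ^ q ^ (m+1) * (RatFunc.X ^ q ^ (m+1) - RatFunc.C (ζ ^ q ^ (m+1)))⁻¹ +
          RatFunc.C (ζ ^ q ^ (m+1)) * ((RatFunc.X ^ q ^ (m+1) - RatFunc.C (ζ ^ q ^ m)) /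
            ((RatFunc.X ^ q ^ (m+2) - RatFunc.C (ζ ^ q ^ (m+1))) *
              (RatFunc.X ^ q ^ (m+1) - RatFunc.C (ζ ^ q ^ (m+1)))))) * q1 +
        (Lf (m+2))⁻¹ * hcayI + (Lf (m+2))⁻¹ * hclyI
  refine ⟨?_, ?_⟩
  · exact main ((t - z ^ q) / (t - z))
      ((t - z)⁻¹ + ((t - z ^ q) ^ (q - 1) * (t - z))⁻¹) x h1x (fun m => (keyx m).1)
  · exact main (z * ((t - z ^ q) / (t - z)))
      (t * (t - z)⁻¹ + z * ((t - z ^ q) ^ (q - 1) * (t - z))⁻¹) y h1y (fun m => (keyx m).2)
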